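/- If z, m ∈ ℂ with m(m²−1) ≠ 0 and z = (m²+1)/(m³−m), then (1 − z²/ζ²)(m³−m)² = (m²−ρ²)(m²−ω²)², where ω = √(√5−2), ζ = √((11+5√5)/2), and ρ = (ω³+5ω)/2. -/

import Mathlib

theorem stmt_9 (z m : ℂ) (h : m * (m ^ 2 - 1) ≠ 0)
    (heq : z = (m ^ 2 + 1) / (m ^ 3 - m))
    (ω ζ ρ : ℝ)
    (hω : ω = Real.sqrt (Real.sqrt 5 - 2))
    (hζ : ζ = Real.sqrt ((11 + 5 * Real.sqrt 5) / 2))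
    (hρ : ρ = (ω ^ 3 + 5 * ω) / 2) :
    (1 - z ^ 2 / (ζ : ℂ) ^ 2) * (m ^ 3 - m) ^ 2 =
      (m ^ 2 - (ρ : ℂ) ^ 2) * (m ^ 2 - (ω : ℂ) ^ 2) ^ 2 := by
  have h5 : (2:ℝ) ≤ Real.sqrt 5 := by
    nlinarith [Real.sq_sqrt (show (0:ℝ) ≤ 5 by norm_num), Real.sqrt_nonneg 5]
  have hs : Real.sqrt 5 ^ 2 = 5 := Real.sq_sqrt (by norm_num)
  have hw2 : ω ^ 2 = Real.sqrt 5 - 2 := by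
    rw [hω]; exact Real.sq_sqrt (by linarith)
  have hz2 : ζ ^ 2 = (11 + 5 * Real.sqrt 5) / 2 := by
    rw [hζ]; exact Real.sq_sqrt (by linarith)
  have hm : m ^ 3 - m ≠ 0 := by
    intro hc; apply h; linear_combination hc
  have hzne : (ζ:ℂ) ≠ 0 := by
    have : ζ ≠ 0 := by
      intro hc
      rw [hc] at hz2
      norm_num at hz2
      linarith
    exact_mod_cast this
  set a : ℂ := (Real.sqrt 5 : ℂ) with ha_def
  have ha : a ^ 2 = 5 := by
    rw [ha_def]; exact_mod_cast congrArg (Complex.ofReal) hs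
  have hw2' : (ω:ℂ) ^ 2 = a - 2 := by
    rw [ha_def]; exact_mod_cast congrArg (Complex.ofReal) hw2
  have hz2' : (ζ:ℂ) ^ 2 = (11 + 5 * a) / 2 := by
    rw [ha_def]
    have := congrArg (Complex.ofReal) hz2
    push_cast at this
    exact this
  have hρ' : (ρ:ℂ) = ((ω:ℂ) ^ 3 + 5 * ω) / 2 := by push_cast [hρ]; ring
  have hρ2 : (ρ:ℂ) ^ 2 = (a + 1) / 2 := by
    rw [hρ']
    linear_combination ((ω:ℂ)^4/4 + (ω:ℂ)^2*(a+8)/4 + (a^2+6*a+9)/4) * hw2'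
      + ((a+4)/4) * ha
  have hzmul : z * (m ^ 3 - m) = m ^ 2 + 1 := by
    rw [heq]; exact div_mul_cancel₀ _ hm
  have h2 : ((11:ℂ) + 5 * a) / 2 ≠ 0 := by
    rw [← hz2']; exact pow_ne_zero 2 hzne
  have hinv : (m ^ 2 + 1) ^ 2 / (((11:ℂ) + 5 * a) / 2)
      = (m ^ 2 + 1) ^ 2 * (5 * a - 11) / 2 := by
    rw [div_eq_iff h2]
    linear_combination (-25 * (m ^ 2 + 1) ^ 2 / 4) * ha
  calc (1 - z ^ 2 / (ζ:ℂ) ^ 2) * (m ^ 3 - m) ^ 2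
      = (m ^ 3 - m) ^ 2 - (z * (m ^ 3 - m)) ^ 2 / (ζ:ℂ) ^ 2 := by ring
    _ = (m ^ 3 - m) ^ 2 - (m ^ 2 + 1) ^ 2 / (((11:ℂ) + 5 * a) / 2) := by
        rw [hzmul, hz2']
    _ = (m ^ 3 - m) ^ 2 - (m ^ 2 + 1) ^ 2 * (5 * a - 11) / 2 := by rw [hinv]
    _ = (m ^ 2 - (a + 1) / 2) * (m ^ 2 - (a - 2)) ^ 2 := by
        linear_combination ((a - 3) / 2 - 2 * m ^ 2) * ha
    _ = (m ^ 2 - (ρ:ℂ) ^ 2) * (m ^ 2 - (ω:ℂ) ^ 2) ^ 2 := by rw [hρ2, hw2']
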